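/- Let D_n = (1/√n) Σ_{t=1}^n ∇_γ m(Z_t, θ0, h0(X_t)) · (ĥ(X_t) − h0(X_t)). If the orthogonality property holds, i.e. E[∇_γ m(Z, θ0, h0(X)) · (ĥ(X) − h0(X)) | ĥ] = 0 almost surely, and ‖∇_γ m(z, θ, γ)‖ ≤ σ uniformly, then the conditional second moment satisfies E[‖D_n‖² | ĥ] ≤ σ² E[‖ĥ(X) − h0(X)‖² | ĥ] almost surely, for every n; in particular, all cross terms over distinct indices t ≠ t' vanish by orthogonality and independence. -/

import Mathlib

open MeasureTheory ProbabilityTheory Filter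

noncomputable section

/-- Bounded measurable functions are integrable on a finite measure space. -/
theorem integrable_of_bound' {α F : Type*} [MeasurableSpace α] (P : Measure α)
    [IsFiniteMeasure P] [NormedAddCommGroup F] (f : α → F)
    (hsm : AEStronglyMeasurable f P) (B : ℝ) (hB : ∀ x, ‖f x‖ ≤ B) : Integrable f P :=
  Integrable.mono' (integrable_const B) hsm (Eventually.of_forall hB)

/-- **Freezing lemma.** If `W` is independent of `𝒢` and `f` is product-measurable and bounded,
then `E[f(W, ·) | 𝒢] (ω) = ∫ f(w, ω) d(law W)(w)` a.s. -/
theorem freeze_condexp {α E F : Type*} (𝒢 : MeasurableSpace α)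
    [m0 : MeasurableSpace α] [mE : MeasurableSpace E]
    [NormedAddCommGroup F] [NormedSpace ℝ F] [CompleteSpace F]
    (P : Measure α) [IsProbabilityMeasure P]
    (h𝒢 : 𝒢 ≤ m0)
    (W : α → E) (hW : Measurable W)
    (hindep : Indep (MeasurableSpace.comap W inferInstance) 𝒢 P)
    (f : E × α → F)
    (hf : StronglyMeasurable[mE.prod 𝒢] f)
    (B : ℝ) (hB : ∀ p, ‖f p‖ ≤ B) :
    P[fun ω => f (W ω, ω) | 𝒢] =ᵐ[P] fun ω => ∫ w, f (w, ω) ∂(P.map W) := by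
  haveI hQP : IsProbabilityMeasure (P.trim h𝒢) :=
    ⟨by rw [trim_measurableSet_eq h𝒢 (@MeasurableSet.univ α 𝒢)]; exact measure_univ⟩
  set μ := P.map W with hμdef
  haveI : IsProbabilityMeasure μ := Measure.isProbabilityMeasure_map hW.aemeasurable
  set Q := P.trim h𝒢 with hQdef
  -- measurability of ω ↦ (W ω, ω)
  have hT : @Measurable α (E × α) m0 (mE.prod 𝒢) (fun ω => (W ω, ω)) :=
    @Measurable.prodMk α m0 E α mE 𝒢 W id hW (measurable_id'' h𝒢)
  -- the law of ω ↦ (W ω, ω) is the product measure μ ⊗ Q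
  have hlaw : @Measure.map α (E × α) m0 (mE.prod 𝒢) (fun ω => (W ω, ω)) P
      = @Measure.prod E α mE 𝒢 μ Q := by
    refine (@Measure.prod_eq E α mE 𝒢 μ _ Q _ _ ?_).symm
    intro s t hs ht
    rw [@Measure.map_apply α (E × α) m0 (mE.prod 𝒢) P _ hT _
      (@MeasurableSet.prod E α mE 𝒢 s t hs ht)]
    have hpre : (fun ω => (W ω, ω)) ⁻¹' (s ×ˢ t) = (W ⁻¹' s) ∩ t := by
      ext ω; simp [Set.mem_prod]
    rw [hpre, (Indep_iff _ _ _).mp hindep _ _ ⟨s, hs, rfl⟩ ht,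
      Measure.map_apply hW hs, hQdef, trim_measurableSet_eq h𝒢 ht]
  -- measurability and integrability of ω ↦ f (W ω, ω)
  have hfT : StronglyMeasurable (fun ω => f (W ω, ω)) :=
    hf.comp_measurable hT
  have hint : Integrable (fun ω => f (W ω, ω)) P :=
    integrable_of_bound' P _ hfT.aestronglyMeasurable B (fun ω => hB _)
  -- the candidate for the conditional expectation
  set g : α → F := fun ω => ∫ w, f (w, ω) ∂μ with hgdef
  have hgsm : StronglyMeasurable[𝒢] g :=
    @MeasureTheory.StronglyMeasurable.integral_prod_left' E α F mE 𝒢 μ _ _ _ f hf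
  have hgB : ∀ ω, ‖g ω‖ ≤ |B| := by
    intro ω
    calc ‖g ω‖ ≤ |B| * (μ Set.univ).toReal :=
          norm_integral_le_of_norm_le_const
            (Eventually.of_forall fun w => le_trans (hB _) (le_abs_self B))
      _ = |B| := by simp
  have hg_int : Integrable g P :=
    integrable_of_bound' P g ((hgsm.mono h𝒢).aestronglyMeasurable) (|B|) hgB
  -- key set-integral identity
  have key : ∀ s : Set α, MeasurableSet[𝒢] s →
      ∫ ω in s, g ω ∂P = ∫ ω in s, f (W ω, ω) ∂P := by
    intro s hs
    have hsp : MeasurableSet[mE.prod 𝒢] (Set.univ ×ˢ s) :=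
      @MeasurableSet.prod E α mE 𝒢 _ _ MeasurableSet.univ hs
    set F1 : E × α → F := (Set.univ ×ˢ s).indicator f with hF1def
    have hF1sm : StronglyMeasurable[mE.prod 𝒢] F1 := hf.indicator hsp
    have hF1B : ∀ p, ‖F1 p‖ ≤ |B| := by
      intro p
      exact le_trans (norm_indicator_le_norm_self f p) (le_trans (hB p) (le_abs_self B))
    have hF1T_int : Integrable (fun ω => F1 (W ω, ω)) P :=
      integrable_of_bound' P _ (hF1sm.comp_measurable hT).aestronglyMeasurable (|B|)
        (fun ω => hF1B _)
    have hF1map_int : Integrable F1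
        (@Measure.map α (E × α) m0 (mE.prod 𝒢) (fun ω => (W ω, ω)) P) := by
      letI : MeasurableSpace (E × α) := mE.prod 𝒢
      exact (integrable_map_measure hF1sm.aestronglyMeasurable hT.aemeasurable).mpr hF1T_int
    have hF1int : Integrable F1 (@Measure.prod E α mE 𝒢 μ Q) :=
      hlaw ▸ hF1map_int
    have h1 : ∫ ω in s, f (W ω, ω) ∂P = ∫ ω, F1 (W ω, ω) ∂P := by
      rw [← integral_indicator (h𝒢 s hs)]
      refine integral_congr_ae (Eventually.of_forall fun ω => ?_)
      by_cases hω : ω ∈ s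
      · simp [hF1def, Set.indicator_of_mem hω, Set.indicator_of_mem, Set.mem_prod, hω]
      · simp [hF1def, Set.indicator_of_notMem hω, Set.indicator_of_notMem, Set.mem_prod, hω]
    have h2 : ∫ ω, F1 (W ω, ω) ∂P
        = ∫ p, F1 p ∂(@Measure.map α (E × α) m0 (mE.prod 𝒢) (fun ω => (W ω, ω)) P) :=
      by
        letI : MeasurableSpace (E × α) := mE.prod 𝒢
        exact (integral_map hT.aemeasurable hF1sm.aestronglyMeasurable).symm
    have h3 : ∫ p, F1 p ∂(@Measure.prod E α mE 𝒢 μ Q)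
        = ∫ ω, (∫ w, F1 (w, ω) ∂μ) ∂Q :=
      @MeasureTheory.integral_prod_symm E α F mE 𝒢 μ Q _ _ _ _ F1 hF1int
    have h4 : ∫ ω, (∫ w, F1 (w, ω) ∂μ) ∂Q = ∫ ω, s.indicator g ω ∂Q := by
      refine integral_congr_ae (Eventually.of_forall fun ω => ?_)
      by_cases hω : ω ∈ s
      · rw [Set.indicator_of_mem hω]
        refine integral_congr_ae (Eventually.of_forall fun w => ?_)
        simp [hF1def, Set.indicator_of_mem, Set.mem_prod, hω]
      · rw [Set.indicator_of_notMem hω]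
        have hz : ∀ w, F1 (w, ω) = 0 := fun w => by
          simp [hF1def, Set.indicator_of_notMem, Set.mem_prod, hω]
        simp [hz]
    have h5 : ∫ ω, s.indicator g ω ∂Q = ∫ ω in s, g ω ∂Q :=
      @integral_indicator α F 𝒢 _ _ g s Q hs
    have h6 : ∫ ω in s, g ω ∂Q = ∫ ω in s, g ω ∂P :=
      (setIntegral_trim h𝒢 hgsm hs).symm
    rw [h1, h2, hlaw, h3, h4, h5, h6]
  exact (ae_eq_condExp_of_forall_setIntegral_eq h𝒢 hint
    (fun s _ _ => hg_int.integrableOn) (fun s hs _ => key s hs)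
    hgsm.aestronglyMeasurable).symm


theorem coord_abs_le_norm {d : ℕ} (v : EuclideanSpace ℝ (Fin d)) (i : Fin d) :
    |v i| ≤ ‖v‖ := by
  rw [EuclideanSpace.norm_eq]
  have h1 : |v i| = Real.sqrt (‖v i‖ ^ 2) := by
    rw [Real.sqrt_sq_eq_abs, Real.norm_eq_abs, abs_abs]
  rw [h1]
  apply Real.sqrt_le_sqrt
  exact Finset.single_le_sum (f := fun j => ‖v j‖ ^ 2) (fun j _ => by positivity)
    (Finset.mem_univ i)

/-- Core second-moment computation for centered i.i.d. vectors. -/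
theorem core_second_moment {Ω 𝒵 : Type*} [MeasurableSpace Ω] [MeasurableSpace 𝒵]
    (P : Measure Ω) [IsProbabilityMeasure P] {d : ℕ}
    (Z : ℕ → Ω → 𝒵) (hZmeas : ∀ t, Measurable (Z t))
    (hiid : iIndepFun Z P)
    (hident : ∀ t, IdentDistrib (Z t) (Z 0) P P)
    (g : 𝒵 → EuclideanSpace ℝ (Fin d)) (hg : StronglyMeasurable g)
    (δ : 𝒵 → ℝ) (hδ : Measurable δ)
    (K : ℝ) (hgK : ∀ z, ‖g z‖ ≤ K)
    (Kδ : ℝ) (hδK : ∀ z, |δ z| ≤ Kδ)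
    (sig : ℝ)
    (hgδ : ∀ z, ‖g z‖ ^ 2 ≤ sig ^ 2 * δ z)
    (hzero : ∀ t, ∫ ω, g (Z t ω) ∂P = 0)
    (n : ℕ) (hn : 0 < n) :
    ∫ ω, ‖(Real.sqrt n)⁻¹ • ∑ t ∈ Finset.range n, g (Z t ω)‖ ^ 2 ∂P
      ≤ sig ^ 2 * ∫ ω, δ (Z 0 ω) ∂P := by
  have hne : Nonempty Ω := by
    have h1 : P Set.univ = 1 := measure_univ
    by_contra h
    rw [not_nonempty_iff] at h
    rw [Set.univ_eq_empty_iff.mpr h, measure_empty] at h1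
    exact zero_ne_one h1
  have hK0 : 0 ≤ K := le_trans (norm_nonneg _) (hgK (Z 0 (Classical.choice hne)))
  -- the summand processes
  set Y : ℕ → Ω → EuclideanSpace ℝ (Fin d) := fun t ω => g (Z t ω) with hYdef
  have hYsm : ∀ t, StronglyMeasurable (Y t) := fun t => hg.comp_measurable (hZmeas t)
  have hYint : ∀ t, Integrable (Y t) P := fun t =>
    Integrable.mono' (integrable_const K) (hYsm t).aestronglyMeasurable
      (Eventually.of_forall fun ω => hgK _)
  -- inner products are integrable
  have hinner_sm : ∀ t s, StronglyMeasurable (fun ω => (inner ℝ (Y t ω) (Y s ω) : ℝ)) :=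
    fun t s => (hYsm t).inner (hYsm s)
  have hinner_int : ∀ t s, Integrable (fun ω => (inner ℝ (Y t ω) (Y s ω) : ℝ)) P := by
    intro t s
    refine Integrable.mono' (integrable_const (K * K)) (hinner_sm t s).aestronglyMeasurable
      (Eventually.of_forall fun ω => ?_)
    calc ‖(inner ℝ (Y t ω) (Y s ω) : ℝ)‖ ≤ ‖Y t ω‖ * ‖Y s ω‖ := norm_inner_le_norm _ _
      _ ≤ K * K := mul_le_mul (hgK _) (hgK _) (norm_nonneg _) hK0
  -- cross terms vanish
  have hcross : ∀ t ∈ Finset.range n, ∀ s ∈ Finset.range n, t ≠ s →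
      ∫ ω, (inner ℝ (Y t ω) (Y s ω) : ℝ) ∂P = 0 := by
    intro t _ s _ hts
    have hind : IndepFun (Y t) (Y s) P :=
      (hiid.indepFun hts).comp hg.measurable hg.measurable
    have hcoord : ∀ i : Fin d, ∫ ω, Y t ω i * Y s ω i ∂P = 0 := by
      intro i
      have hproj : Measurable (fun v : EuclideanSpace ℝ (Fin d) => v i) :=
        (EuclideanSpace.proj (𝕜 := ℝ) i).measurable
      have hind' : IndepFun (fun ω => Y t ω i) (fun ω => Y s ω i) P :=
        hind.comp hproj hproj
      have hint' : ∀ u, Integrable (fun ω => Y u ω i) P := by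
        intro u
        refine Integrable.mono' (integrable_const K)
          ((hproj.comp (hYsm u).measurable).aestronglyMeasurable)
          (Eventually.of_forall fun ω => ?_)
        exact le_trans (coord_abs_le_norm _ i) (hgK _)
      have hmean : ∀ u, ∫ ω, Y u ω i ∂P = 0 := by
        intro u
        have h3 : ∫ ω, Y u ω i ∂P
            = (EuclideanSpace.proj (𝕜 := ℝ) i) (∫ ω, Y u ω ∂P) :=
          ContinuousLinearMap.integral_comp_comm (EuclideanSpace.proj (𝕜 := ℝ) i) (hYint u)
        have h4 : ∫ ω, Y u ω ∂P = 0 := hzero u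
        rw [h3, h4, map_zero]
      have := hind'.integral_mul_eq_mul_integral (hint' t).aestronglyMeasurable (hint' s).aestronglyMeasurable
      calc ∫ ω, Y t ω i * Y s ω i ∂P
          = ∫ ω, ((fun ω => Y t ω i) * (fun ω => Y s ω i)) ω ∂P := rfl
        _ = (∫ ω, Y t ω i ∂P) * ∫ ω, Y s ω i ∂P := this
        _ = 0 := by rw [hmean t, hmean s, mul_zero]
    calc ∫ ω, (inner ℝ (Y t ω) (Y s ω) : ℝ) ∂P
        = ∫ ω, ∑ i : Fin d, Y t ω i * Y s ω i ∂P := by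
          refine integral_congr_ae (Eventually.of_forall fun ω => ?_)
          simp [PiLp.inner_apply, RCLike.inner_apply, conj_trivial, mul_comm]
      _ = ∑ i : Fin d, ∫ ω, Y t ω i * Y s ω i ∂P := by
          refine integral_finset_sum _ fun i _ => ?_
          have hproj : Measurable (fun v : EuclideanSpace ℝ (Fin d) => v i) :=
            (EuclideanSpace.proj (𝕜 := ℝ) i).measurable
          refine Integrable.mono' (integrable_const (K * K))
            (((hproj.comp (hYsm t).measurable).aestronglyMeasurable).mul
              ((hproj.comp (hYsm s).measurable).aestronglyMeasurable))
            (Eventually.of_forall fun ω => ?_)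
          rw [Real.norm_eq_abs, abs_mul]
          exact mul_le_mul (le_trans (coord_abs_le_norm _ i) (hgK _))
            (le_trans (coord_abs_le_norm _ i) (hgK _)) (abs_nonneg _) hK0
      _ = 0 := by
          rw [Finset.sum_eq_zero]
          intro i _
          exact hcoord i
  -- diagonal terms
  have hdiag : ∀ t, ∫ ω, ‖Y t ω‖ ^ 2 ∂P ≤ sig ^ 2 * ∫ ω, δ (Z 0 ω) ∂P := by
    intro t
    have hδint : ∀ u, Integrable (fun ω => δ (Z u ω)) P := fun u =>
      Integrable.mono' (integrable_const Kδ)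
        ((hδ.comp (hZmeas u)).aestronglyMeasurable)
        (Eventually.of_forall fun ω => by rw [Real.norm_eq_abs]; exact hδK _)
    have hnorm2int : Integrable (fun ω => ‖Y t ω‖ ^ 2) P := by
      refine Integrable.mono' (integrable_const (K ^ 2))
        (((hYsm t).norm.pow 2).aestronglyMeasurable)
        (Eventually.of_forall fun ω => ?_)
      rw [Real.norm_eq_abs, abs_of_nonneg (by positivity)]
      exact pow_le_pow_left₀ (norm_nonneg _) (hgK _) 2
    calc ∫ ω, ‖Y t ω‖ ^ 2 ∂P ≤ ∫ ω, sig ^ 2 * δ (Z t ω) ∂P := by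
          refine integral_mono hnorm2int ((hδint t).const_mul _) fun ω => hgδ _
      _ = sig ^ 2 * ∫ ω, δ (Z t ω) ∂P := integral_const_mul _ _
      _ = sig ^ 2 * ∫ ω, δ (Z 0 ω) ∂P := by
          congr 1
          exact ((hident t).comp hδ).integral_eq
  -- expand the square
  have hexpand : ∫ ω, ‖∑ t ∈ Finset.range n, Y t ω‖ ^ 2 ∂P
      = ∑ t ∈ Finset.range n, ∑ s ∈ Finset.range n, ∫ ω, (inner ℝ (Y t ω) (Y s ω) : ℝ) ∂P := by
    have h1 : ∀ ω, ‖∑ t ∈ Finset.range n, Y t ω‖ ^ 2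
        = ∑ t ∈ Finset.range n, ∑ s ∈ Finset.range n, (inner ℝ (Y t ω) (Y s ω) : ℝ) := by
      intro ω
      rw [← real_inner_self_eq_norm_sq, sum_inner]
      refine Finset.sum_congr rfl fun t _ => ?_
      rw [inner_sum]
    calc ∫ ω, ‖∑ t ∈ Finset.range n, Y t ω‖ ^ 2 ∂P
        = ∫ ω, ∑ t ∈ Finset.range n, ∑ s ∈ Finset.range n, (inner ℝ (Y t ω) (Y s ω) : ℝ) ∂P :=
          integral_congr_ae (Eventually.of_forall fun ω => h1 ω)
      _ = ∑ t ∈ Finset.range n, ∫ ω, ∑ s ∈ Finset.range n, (inner ℝ (Y t ω) (Y s ω) : ℝ) ∂P :=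
          integral_finset_sum _ fun t _ => integrable_finset_sum _ fun s _ => hinner_int t s
      _ = ∑ t ∈ Finset.range n, ∑ s ∈ Finset.range n, ∫ ω, (inner ℝ (Y t ω) (Y s ω) : ℝ) ∂P :=
          Finset.sum_congr rfl fun t _ => integral_finset_sum _ fun s _ => hinner_int t s
  have hdiagsum : ∑ t ∈ Finset.range n, ∑ s ∈ Finset.range n,
      ∫ ω, (inner ℝ (Y t ω) (Y s ω) : ℝ) ∂P
      = ∑ t ∈ Finset.range n, ∫ ω, ‖Y t ω‖ ^ 2 ∂P := by
    refine Finset.sum_congr rfl fun t ht => ?_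
    rw [Finset.sum_eq_single_of_mem t ht (fun s hs hst => hcross t ht s hs (Ne.symm hst))]
    refine integral_congr_ae (Eventually.of_forall fun ω => ?_)
    show (inner ℝ (Y t ω) (Y t ω) : ℝ) = ‖Y t ω‖ ^ 2
    exact real_inner_self_eq_norm_sq _
  -- put everything together
  have hsmul : ∀ ω, ‖(Real.sqrt n)⁻¹ • ∑ t ∈ Finset.range n, Y t ω‖ ^ 2
      = (n : ℝ)⁻¹ * ‖∑ t ∈ Finset.range n, Y t ω‖ ^ 2 := by
    intro ω
    rw [norm_smul, mul_pow, Real.norm_eq_abs, abs_of_nonneg (by positivity), inv_pow,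
      Real.sq_sqrt (by positivity : (0:ℝ) ≤ (n:ℝ))]
  calc ∫ ω, ‖(Real.sqrt n)⁻¹ • ∑ t ∈ Finset.range n, Y t ω‖ ^ 2 ∂P
      = ∫ ω, (n : ℝ)⁻¹ * ‖∑ t ∈ Finset.range n, Y t ω‖ ^ 2 ∂P :=
        integral_congr_ae (Eventually.of_forall fun ω => hsmul ω)
    _ = (n : ℝ)⁻¹ * ∫ ω, ‖∑ t ∈ Finset.range n, Y t ω‖ ^ 2 ∂P := integral_const_mul _ _
    _ = (n : ℝ)⁻¹ * ∑ t ∈ Finset.range n, ∫ ω, ‖Y t ω‖ ^ 2 ∂P := by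
        rw [hexpand, hdiagsum]
    _ ≤ (n : ℝ)⁻¹ * ∑ t ∈ Finset.range n, (sig ^ 2 * ∫ ω, δ (Z 0 ω) ∂P) := by
        refine mul_le_mul_of_nonneg_left ?_ (by positivity)
        exact Finset.sum_le_sum fun t _ => hdiag t
    _ = sig ^ 2 * ∫ ω, δ (Z 0 ω) ∂P := by
        rw [Finset.sum_const, Finset.card_range, nsmul_eq_mul, ← mul_assoc,
          inv_mul_cancel₀ (by exact_mod_cast hn.ne' : (n:ℝ) ≠ 0), one_mul]


/-- **Conditional second moment bound for `D_n`.**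
With `D_n = n^{-1/2} ∑_{t<n} ∇γ m(Z_t, θ0, h0(X_t)) ⬝ (ĥ(X_t) - h0(X_t))`, if the orthogonality
property holds and `‖∇γ m‖ ≤ σ` uniformly, then
`E[‖D_n‖² | ĥ] ≤ σ² E[‖ĥ(X) - h0(X)‖² | ĥ]` almost surely, for every `n`
(the cross terms over distinct indices vanish by orthogonality and independence). -/
theorem conditional_second_moment_of_D
    {Ω 𝒵 S : Type*} [MeasurableSpace Ω] [MeasurableSpace 𝒵] [MeasurableSpace S]
    (P : Measure Ω) [IsProbabilityMeasure P]
    {d l : ℕ}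
    -- the moment function and its Jacobian in the third argument
    (m : 𝒵 → EuclideanSpace ℝ (Fin d) → EuclideanSpace ℝ (Fin l) → EuclideanSpace ℝ (Fin d))
    (Dγm : 𝒵 → EuclideanSpace ℝ (Fin d) → EuclideanSpace ℝ (Fin l) →
      (EuclideanSpace ℝ (Fin l) →L[ℝ] EuclideanSpace ℝ (Fin d)))
    (hDγm : ∀ z θ γ, HasFDerivAt (fun γ' => m z θ γ') (Dγm z θ γ) γ)
    (hDγm_meas : StronglyMeasurable
      (fun p : 𝒵 × EuclideanSpace ℝ (Fin d) × EuclideanSpace ℝ (Fin l) => Dγm p.1 p.2.1 p.2.2))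
    -- true parameter and nuisance function
    (θ0 : EuclideanSpace ℝ (Fin d)) (h0 : S → EuclideanSpace ℝ (Fin l))
    (hh0_meas : Measurable h0)
    -- the i.i.d. data and the measurable subvector
    (Z : ℕ → Ω → 𝒵) (hZmeas : ∀ t, Measurable (Z t))
    (hiid : iIndepFun Z P)
    (hident : ∀ t, IdentDistrib (Z t) (Z 0) P P)
    (X : 𝒵 → S) (hX : Measurable X)
    -- the auxiliary σ-algebra and the first-stage estimate, measurable w.r.t. it
    (𝒢 : MeasurableSpace Ω) (h𝒢 : 𝒢 ≤ ‹MeasurableSpace Ω›)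
    (hhat : Ω → S → EuclideanSpace ℝ (Fin l))
    (hhat_meas : @StronglyMeasurable _ _ _ (MeasurableSpace.prod 𝒢 inferInstance)
      (fun p : Ω × S => hhat p.1 p.2))
    -- the auxiliary sample is independent of the data sequence
    (hindep : Indep (MeasurableSpace.comap (fun ω t => Z t ω) inferInstance) 𝒢 P)
    -- uniform bounds
    (C : ℝ) (hbound_hat : ∀ ω x, ‖hhat ω x‖ ≤ C) (hbound_h0 : ∀ x, ‖h0 x‖ ≤ C)
    (sig : ℝ) (hbound_D : ∀ z θ γ, ‖Dγm z θ γ‖ ≤ sig)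
    -- the orthogonality property
    (horth : ∀ t, P[fun ω => (Dγm (Z t ω) θ0 (h0 (X (Z t ω))))
        (hhat ω (X (Z t ω)) - h0 (X (Z t ω))) | 𝒢] =ᵐ[P] 0) :
    ∀ n : ℕ,
      ∀ᵐ ω ∂P,
        (P[fun ω' => ‖(Real.sqrt n)⁻¹ •
            ∑ t ∈ Finset.range n, (Dγm (Z t ω') θ0 (h0 (X (Z t ω'))))
              (hhat ω' (X (Z t ω')) - h0 (X (Z t ω')))‖ ^ 2 | 𝒢]) ω ≤
          sig ^ 2 *
            (P[fun ω' => ‖hhat ω' (X (Z 0 ω')) - h0 (X (Z 0 ω'))‖ ^ 2 | 𝒢]) ω := by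
  classical
  rename_i mΩ m𝒵 mS hPP
  letI : MeasurableSpace Ω := mΩ
  intro n
  by_cases hle : 𝒢 ≤ mΩ
  swap
  · refine Eventually.of_forall fun ω => ?_
    rw [condExp_of_not_le hle, condExp_of_not_le hle]
    simp
  -- nonemptiness and sign facts
  have hne : Nonempty Ω := by
    have h1 : P Set.univ = 1 := measure_univ
    by_contra h
    rw [not_nonempty_iff] at h
    rw [Set.univ_eq_empty_iff.mpr h, measure_empty] at h1
    exact zero_ne_one h1
  obtain ⟨ω₀⟩ := hne
  have hsig0 : 0 ≤ sig := le_trans (norm_nonneg _) (hbound_D (Z 0 ω₀) θ0 0)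
  have hC0 : 0 ≤ C := le_trans (norm_nonneg _) (hbound_h0 (X (Z 0 ω₀)))
  -- the data sequence as one random element
  set W : Ω → (ℕ → 𝒵) := fun ω t => Z t ω with hWdef
  have hW : Measurable W := measurable_pi_lambda _ hZmeas
  set mE : MeasurableSpace (ℕ → 𝒵) := inferInstance with hmE
  -- measurability of the basic blocks
  have hA_sm : StronglyMeasurable (fun z : 𝒵 => Dγm z θ0 (h0 (X z))) :=
    hDγm_meas.comp_measurable
      (measurable_id.prodMk (measurable_const.prodMk (hh0_meas.comp hX)))
  have hslice : ∀ ω, StronglyMeasurable (fun x : S => hhat ω x) := fun ω =>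
    hhat_meas.comp_measurable (@measurable_prodMk_left Ω S 𝒢 _ ω)
  have hgz : ∀ ω, StronglyMeasurable
      (fun z : 𝒵 => (Dγm z θ0 (h0 (X z))) (hhat ω (X z) - h0 (X z))) := by
    intro ω
    have h1 : StronglyMeasurable (fun z : 𝒵 => hhat ω (X z) - h0 (X z)) :=
      ((hslice ω).comp_measurable hX).sub (hh0_meas.comp hX).stronglyMeasurable
    exact (isBoundedBilinearMap_apply (𝕜 := ℝ)).continuous.comp_stronglyMeasurable
      (hA_sm.prodMk h1)
  -- measurability on the product space
  have hfst : @Measurable ((ℕ → 𝒵) × Ω) (ℕ → 𝒵) (mE.prod 𝒢) mE Prod.fst :=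
    @measurable_fst _ _ mE 𝒢
  have hsnd : @Measurable ((ℕ → 𝒵) × Ω) Ω (mE.prod 𝒢) 𝒢 Prod.snd :=
    @measurable_snd _ _ mE 𝒢
  have he1 : ∀ t : ℕ, @Measurable ((ℕ → 𝒵) × Ω) 𝒵 (mE.prod 𝒢) _
      (fun p : (ℕ → 𝒵) × Ω => p.1 t) :=
    fun t => (measurable_pi_apply t).comp hfst
  have hvpt : ∀ t : ℕ, StronglyMeasurable[mE.prod 𝒢]
      (fun p : (ℕ → 𝒵) × Ω => hhat p.2 (X (p.1 t)) - h0 (X (p.1 t))) := by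
    intro t
    have h1 : StronglyMeasurable[mE.prod 𝒢] (fun p : (ℕ → 𝒵) × Ω => hhat p.2 (X (p.1 t))) :=
      hhat_meas.comp_measurable (Measurable.prodMk hsnd (hX.comp (he1 t)))
    exact h1.sub ((hh0_meas.comp (hX.comp (he1 t))).stronglyMeasurable)
  have hgpt : ∀ t : ℕ, StronglyMeasurable[mE.prod 𝒢]
      (fun p : (ℕ → 𝒵) × Ω =>
        (Dγm (p.1 t) θ0 (h0 (X (p.1 t)))) (hhat p.2 (X (p.1 t)) - h0 (X (p.1 t)))) := by
    intro t
    have hA : StronglyMeasurable[mE.prod 𝒢]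
        (fun p : (ℕ → 𝒵) × Ω => Dγm (p.1 t) θ0 (h0 (X (p.1 t)))) :=
      hA_sm.comp_measurable (he1 t)
    exact (isBoundedBilinearMap_apply (𝕜 := ℝ)).continuous.comp_stronglyMeasurable
      (hA.prodMk (hvpt t))
  -- uniform bounds
  have hvbound : ∀ ω x, ‖hhat ω x - h0 x‖ ≤ 2 * C := by
    intro ω x
    calc ‖hhat ω x - h0 x‖ ≤ ‖hhat ω x‖ + ‖h0 x‖ := norm_sub_le _ _
      _ ≤ C + C := add_le_add (hbound_hat ω x) (hbound_h0 x)
      _ = 2 * C := by ring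
  have hgbound : ∀ ω z,
      ‖(Dγm z θ0 (h0 (X z))) (hhat ω (X z) - h0 (X z))‖ ≤ sig * (2 * C) := by
    intro ω z
    calc ‖(Dγm z θ0 (h0 (X z))) (hhat ω (X z) - h0 (X z))‖
        ≤ ‖Dγm z θ0 (h0 (X z))‖ * ‖hhat ω (X z) - h0 (X z)‖ :=
          ContinuousLinearMap.le_opNorm _ _
      _ ≤ sig * (2 * C) :=
          mul_le_mul (hbound_D _ _ _) (hvbound ω (X z)) (norm_nonneg _) hsig0
  -- (A) a.e. vanishing of the frozen means
  have hvec : ∀ t : ℕ, ∀ᵐ ω ∂P,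
      ∫ ω', (Dγm (Z t ω') θ0 (h0 (X (Z t ω'))))
        (hhat ω (X (Z t ω')) - h0 (X (Z t ω'))) ∂P = 0 := by
    intro t
    have hfr : P[(fun ω => (Dγm (Z t ω) θ0 (h0 (X (Z t ω))))
          (hhat ω (X (Z t ω)) - h0 (X (Z t ω)))) | 𝒢]
        =ᵐ[P] fun ω => ∫ w, (Dγm (w t) θ0 (h0 (X (w t))))
          (hhat ω (X (w t)) - h0 (X (w t))) ∂(P.map W) :=
      freeze_condexp 𝒢 P hle W hW hindep
        (fun p : (ℕ → 𝒵) × Ω =>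
          (Dγm (p.1 t) θ0 (h0 (X (p.1 t)))) (hhat p.2 (X (p.1 t)) - h0 (X (p.1 t))))
        (hgpt t) (sig * (2 * C)) (fun p => hgbound _ _)
    filter_upwards [hfr, horth t] with ω h1 h2
    have h3 : ∫ w, (Dγm (w t) θ0 (h0 (X (w t))))
        (hhat ω (X (w t)) - h0 (X (w t))) ∂(P.map W) = 0 := by
      rw [← h1]; exact h2
    have h4 : ∫ w, (Dγm (w t) θ0 (h0 (X (w t))))
        (hhat ω (X (w t)) - h0 (X (w t))) ∂(P.map W)
        = ∫ ω', (Dγm (Z t ω') θ0 (h0 (X (Z t ω'))))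
            (hhat ω (X (Z t ω')) - h0 (X (Z t ω'))) ∂P :=
      integral_map hW.aemeasurable
        (((hgz ω).comp_measurable (measurable_pi_apply t)).aestronglyMeasurable)
    rw [← h4]; exact h3
  -- (B) freezing the squared norm of D_n
  have hfrB : P[(fun ω' => ‖(Real.sqrt n)⁻¹ •
        ∑ t ∈ Finset.range n, (Dγm (Z t ω') θ0 (h0 (X (Z t ω'))))
          (hhat ω' (X (Z t ω')) - h0 (X (Z t ω')))‖ ^ 2) | 𝒢]
      =ᵐ[P] fun ω => ∫ w, ‖(Real.sqrt n)⁻¹ •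
        ∑ t ∈ Finset.range n, (Dγm (w t) θ0 (h0 (X (w t))))
          (hhat ω (X (w t)) - h0 (X (w t)))‖ ^ 2 ∂(P.map W) := by
    refine freeze_condexp 𝒢 P hle W hW hindep
      (fun p : (ℕ → 𝒵) × Ω => ‖(Real.sqrt n)⁻¹ •
        ∑ t ∈ Finset.range n, (Dγm (p.1 t) θ0 (h0 (X (p.1 t))))
          (hhat p.2 (X (p.1 t)) - h0 (X (p.1 t)))‖ ^ 2)
      ?_ (((Real.sqrt n)⁻¹ * (n * (sig * (2 * C)))) ^ 2) ?_
    · exact ((Finset.stronglyMeasurable_fun_sum _ fun t _ => hgpt t).const_smul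
        ((Real.sqrt n)⁻¹)).norm.pow 2
    · intro p
      rw [Real.norm_eq_abs, abs_of_nonneg (by positivity)]
      refine pow_le_pow_left₀ (norm_nonneg _) ?_ 2
      rw [norm_smul, Real.norm_eq_abs, abs_of_nonneg (by positivity)]
      refine mul_le_mul_of_nonneg_left ?_ (by positivity)
      calc ‖∑ t ∈ Finset.range n, (Dγm (p.1 t) θ0 (h0 (X (p.1 t))))
            (hhat p.2 (X (p.1 t)) - h0 (X (p.1 t)))‖
          ≤ ∑ t ∈ Finset.range n, ‖(Dγm (p.1 t) θ0 (h0 (X (p.1 t))))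
            (hhat p.2 (X (p.1 t)) - h0 (X (p.1 t)))‖ := norm_sum_le _ _
        _ ≤ ∑ _t ∈ Finset.range n, (sig * (2 * C)) :=
            Finset.sum_le_sum fun t _ => hgbound _ _
        _ = n * (sig * (2 * C)) := by
            rw [Finset.sum_const, Finset.card_range, nsmul_eq_mul]
  -- (C) freezing the squared first-stage error
  have hfrC : P[(fun ω' => ‖hhat ω' (X (Z 0 ω')) - h0 (X (Z 0 ω'))‖ ^ 2) | 𝒢]
      =ᵐ[P] fun ω => ∫ w, ‖hhat ω (X (w 0)) - h0 (X (w 0))‖ ^ 2 ∂(P.map W) := by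
    refine freeze_condexp 𝒢 P hle W hW hindep
      (fun p : (ℕ → 𝒵) × Ω => ‖hhat p.2 (X (p.1 0)) - h0 (X (p.1 0))‖ ^ 2)
      ((hvpt 0).norm.pow 2) ((2 * C) ^ 2) ?_
    intro p
    rw [Real.norm_eq_abs, abs_of_nonneg (by positivity)]
    exact pow_le_pow_left₀ (norm_nonneg _) (hvbound _ _) 2
  -- case split on n
  rcases Nat.eq_zero_or_pos n with hn | hn
  · subst hn
    have h0fun : (fun ω' : Ω => ‖(Real.sqrt (0 : ℕ))⁻¹ •
        ∑ t ∈ Finset.range 0, (Dγm (Z t ω') θ0 (h0 (X (Z t ω'))))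
          (hhat ω' (X (Z t ω')) - h0 (X (Z t ω')))‖ ^ 2) = (0 : Ω → ℝ) := by
      funext ω'; simp
    rw [h0fun, condExp_zero]
    filter_upwards [condExp_nonneg (m := 𝒢) (μ := P)
      (f := fun ω' => ‖hhat ω' (X (Z 0 ω')) - h0 (X (Z 0 ω'))‖ ^ 2)
      (Eventually.of_forall fun ω' => by positivity)] with ω hpos
    have : (0 : Ω → ℝ) ω = 0 := rfl
    rw [this]
    exact mul_nonneg (by positivity) hpos
  · filter_upwards [hfrB, hfrC, ae_all_iff.mpr hvec] with ω hB' hC' hvv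
    rw [hB', hC']
    have hmapB : ∫ w, ‖(Real.sqrt n)⁻¹ •
        ∑ t ∈ Finset.range n, (Dγm (w t) θ0 (h0 (X (w t))))
          (hhat ω (X (w t)) - h0 (X (w t)))‖ ^ 2 ∂(P.map W)
        = ∫ ω', ‖(Real.sqrt n)⁻¹ •
        ∑ t ∈ Finset.range n, (Dγm (Z t ω') θ0 (h0 (X (Z t ω'))))
          (hhat ω (X (Z t ω')) - h0 (X (Z t ω')))‖ ^ 2 ∂P :=
      integral_map hW.aemeasurable
        (((Finset.stronglyMeasurable_fun_sum _ fun t _ =>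
            (hgz ω).comp_measurable (measurable_pi_apply t)).const_smul
          ((Real.sqrt n)⁻¹)).norm.pow 2).aestronglyMeasurable
    have hmapC : ∫ w, ‖hhat ω (X (w 0)) - h0 (X (w 0))‖ ^ 2 ∂(P.map W)
        = ∫ ω', ‖hhat ω (X (Z 0 ω')) - h0 (X (Z 0 ω'))‖ ^ 2 ∂P :=
      integral_map hW.aemeasurable
        (((((hslice ω).comp_measurable (hX.comp (measurable_pi_apply 0))).sub
          ((hh0_meas.comp (hX.comp (measurable_pi_apply 0))).stronglyMeasurable)).norm.pow
            2).aestronglyMeasurable)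
    rw [hmapB, hmapC]
    refine core_second_moment P Z hZmeas hiid hident
      (fun z => (Dγm z θ0 (h0 (X z))) (hhat ω (X z) - h0 (X z))) (hgz ω)
      (fun z => ‖hhat ω (X z) - h0 (X z)‖ ^ 2) ?_ (sig * (2 * C)) (hgbound ω)
      ((2 * C) ^ 2) ?_ sig ?_ hvv n hn
    · exact ((((hslice ω).comp_measurable hX).sub
        (hh0_meas.comp hX).stronglyMeasurable).norm.pow 2).measurable
    · intro z
      rw [abs_of_nonneg (by positivity)]
      exact pow_le_pow_left₀ (norm_nonneg _) (hvbound _ _) 2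
    · intro z
      have h5 : ‖(Dγm z θ0 (h0 (X z))) (hhat ω (X z) - h0 (X z))‖
          ≤ sig * ‖hhat ω (X z) - h0 (X z)‖ := by
        calc ‖(Dγm z θ0 (h0 (X z))) (hhat ω (X z) - h0 (X z))‖
            ≤ ‖Dγm z θ0 (h0 (X z))‖ * ‖hhat ω (X z) - h0 (X z)‖ :=
              ContinuousLinearMap.le_opNorm _ _
          _ ≤ sig * ‖hhat ω (X z) - h0 (X z)‖ :=
              mul_le_mul_of_nonneg_right (hbound_D _ _ _) (norm_nonneg _)
      calc ‖(Dγm z θ0 (h0 (X z))) (hhat ω (X z) - h0 (X z))‖ ^ 2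
          ≤ (sig * ‖hhat ω (X z) - h0 (X z)‖) ^ 2 :=
            pow_le_pow_left₀ (norm_nonneg _) h5 2
        _ = sig ^ 2 * ‖hhat ω (X z) - h0 (X z)‖ ^ 2 := by ring
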